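/- Let A ⊆ ℤ be a finite nonempty set and Λ ⊆ ℤ a set such that A tiles ℤ with Λ at level 1, i.e. every integer x can be written in exactly one way as x = a + λ with a ∈ A and λ ∈ Λ. Let D = max A − min A be the diameter of A. Then Λ is periodic with a period of size at most 2^D: there exists an integer t with 1 ≤ t ≤ 2^D such that Λ + t = Λ. -/

import Mathlib

/-- Newman's theorem: every tiling of `ℤ` at level 1 by a finite set `A` of
diameter `D` is periodic with a period of size at most `2 ^ D`. -/
theorem stmt_0 (A : Finset ℤ) (hA : A.Nonempty) (Λ : Set ℤ)
    (htile : ∀ x : ℤ, ∃! p : ℤ × ℤ, p.1 ∈ A ∧ p.2 ∈ Λ ∧ p.1 + p.2 = x) :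
    ∃ t : ℤ, 1 ≤ t ∧ t ≤ 2 ^ (A.max' hA - A.min' hA).toNat ∧
      (fun l => l + t) '' Λ = Λ := by
  classical
  set m := A.min' hA with hm
  set M := A.max' hA with hM
  have hmA : m ∈ A := A.min'_mem hA
  have hMA : M ∈ A := A.max'_mem hA
  have hmM : m ≤ M := A.min'_le M hMA
  set D : ℤ := M - m with hD
  have hD0 : 0 ≤ D := by omega
  -- key structural lemma from unique representation
  have key : ∀ (z T a₀ w0 : ℤ), a₀ ∈ A → a₀ + w0 = T →
      ¬ (z ≤ w0 ∧ w0 < z + D) →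
      (∀ a lam, a ∈ A → a + lam = T → lam = w0 ∨ (z ≤ lam ∧ lam < z + D)) →
      (w0 ∈ Λ ↔ ¬ ∃ a lam, a ∈ A ∧ lam ∈ Λ ∧ z ≤ lam ∧ lam < z + D ∧ a + lam = T) := by
    intro z T a₀ w0 ha₀ hsum hnot hrange
    obtain ⟨p, hp, hup⟩ := htile T
    constructor
    · rintro hw0 ⟨a, lam, haA, hlam, h1, h2, h3⟩
      have e1 := hup (a₀, w0) ⟨ha₀, hw0, hsum⟩
      have e2 := hup (a, lam) ⟨haA, hlam, h3⟩
      have : lam = w0 := by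
        have := e2.trans e1.symm
        exact congrArg Prod.snd this
      exact hnot ⟨by omega, by omega⟩
    · intro hne
      obtain ⟨hpA, hpΛ, hpsum⟩ := hp
      rcases hrange p.1 p.2 hpA hpsum with heq | hwinp
      · rw [← heq]; exact hpΛ
      · exact absurd ⟨p.1, p.2, hpA, hpΛ, hwinp.1, hwinp.2, hpsum⟩ hne
  have fwd : ∀ z : ℤ, (z + D ∈ Λ ↔
      ¬ ∃ a lam, a ∈ A ∧ lam ∈ Λ ∧ z ≤ lam ∧ lam < z + D ∧ a + lam = z + M) := by
    intro z
    apply key z (z + M) m (z + D) hmA (by omega) (by omega)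
    intro a lam haA hsum
    have h1 : m ≤ a := A.min'_le a haA
    have h2 : a ≤ M := A.le_max' a haA
    omega
  have bwd : ∀ z : ℤ, (z - 1 ∈ Λ ↔
      ¬ ∃ a lam, a ∈ A ∧ lam ∈ Λ ∧ z ≤ lam ∧ lam < z + D ∧ a + lam = z + (M - 1)) := by
    intro z
    apply key z (z + (M - 1)) M (z - 1) hMA (by omega) (by omega)
    intro a lam haA hsum
    have h1 : m ≤ a := A.min'_le a haA
    have h2 : a ≤ M := A.le_max' a haA
    omega
  -- window determinism, both directions
  have exiff : ∀ x y c : ℤ, (∀ k : ℤ, 0 ≤ k → k < D → (x + k ∈ Λ ↔ y + k ∈ Λ)) →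
      ((∃ a lam, a ∈ A ∧ lam ∈ Λ ∧ x ≤ lam ∧ lam < x + D ∧ a + lam = x + c) →
       (∃ a lam, a ∈ A ∧ lam ∈ Λ ∧ y ≤ lam ∧ lam < y + D ∧ a + lam = y + c)) := by
    rintro x y c hwin ⟨a, lam, haA, hlam, h1, h2, h3⟩
    refine ⟨a, y + (lam - x), haA, ?_, by omega, by omega, by omega⟩
    have := hwin (lam - x) (by omega) (by omega)
    have e : x + (lam - x) = lam := by ring
    rw [e] at this
    exact this.mp hlam
  have step : ∀ x y : ℤ, (∀ k : ℤ, 0 ≤ k → k < D → (x + k ∈ Λ ↔ y + k ∈ Λ)) →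
      ((x + D ∈ Λ ↔ y + D ∈ Λ) ∧ (x - 1 ∈ Λ ↔ y - 1 ∈ Λ)) := by
    intro x y hwin
    have hwin' : ∀ k : ℤ, 0 ≤ k → k < D → (y + k ∈ Λ ↔ x + k ∈ Λ) :=
      fun k h1 h2 => (hwin k h1 h2).symm
    constructor
    · rw [fwd x, fwd y]
      exact not_congr ⟨exiff x y M hwin, exiff y x M hwin'⟩
    · rw [bwd x, bwd y]
      exact not_congr ⟨exiff x y (M-1) hwin, exiff y x (M-1) hwin'⟩
  -- propagate window equality to all shifts
  have shift : ∀ x y : ℤ, (∀ k : ℤ, 0 ≤ k → k < D → (x + k ∈ Λ ↔ y + k ∈ Λ)) →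
      ∀ n : ℤ, (x + n ∈ Λ ↔ y + n ∈ Λ) := by
    intro x y hwin
    have main : ∀ n : ℤ, ∀ k : ℤ, 0 ≤ k → k < D → (x + n + k ∈ Λ ↔ y + n + k ∈ Λ) := by
      intro n
      induction n using Int.induction_on with
      | zero => simpa using hwin
      | succ i ih =>
        intro k hk hkD
        rcases eq_or_lt_of_le (by omega : k + 1 ≤ D) with hkd | hkd
        · have h := (step (x + i) (y + i) ih).1
          have ex : x + (i + 1 : ℤ) + k = x + i + D := by omega
          have ey : y + (i + 1 : ℤ) + k = y + i + D := by omega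
          rw [ex, ey]; exact h
        · have h := ih (k + 1) (by omega) (by omega)
          have ex : x + (i + 1 : ℤ) + k = x + i + (k + 1) := by ring
          have ey : y + (i + 1 : ℤ) + k = y + i + (k + 1) := by ring
          rw [ex, ey]; exact h
      | pred i ih =>
        intro k hk hkD
        rcases eq_or_lt_of_le hk with hk0 | hk0
        · have h := (step (x + (-i)) (y + (-i)) ih).2
          have ex : x + (-(i : ℤ) - 1) + k = x + (-i : ℤ) - 1 := by omega
          have ey : y + (-(i : ℤ) - 1) + k = y + (-i : ℤ) - 1 := by omega
          rw [ex, ey]; exact h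
        · have h := ih (k - 1) (by omega) (by omega)
          have ex : x + (-(i : ℤ) - 1) + k = x + (-i : ℤ) + (k - 1) := by ring
          have ey : y + (-(i : ℤ) - 1) + k = y + (-i : ℤ) + (k - 1) := by ring
          rw [ex, ey]; exact h
    intro n
    have h := (step (x + (n - D)) (y + (n - D)) (main (n - D))).1
    have ex : x + (n - D) + D = x + n := by ring
    have ey : y + (n - D) + D = y + n := by ring
    rw [ex, ey] at h
    exact h
  -- pigeonhole on windows
  set Dn := D.toNat with hDn
  have hDc : (Dn : ℤ) = D := Int.toNat_of_nonneg hD0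
  have hcard : Fintype.card (Fin Dn → Bool) < Fintype.card (Fin (2 ^ Dn + 1)) := by
    simp [Fintype.card_fun]
  obtain ⟨i, j, hij, hgij⟩ := Fintype.exists_ne_map_eq_of_card_lt
    (fun i : Fin (2 ^ Dn + 1) => fun k : Fin Dn => decide (((i.val : ℤ) + (k.val : ℤ)) ∈ Λ)) hcard
  -- wlog i < j
  have hmain : ∀ (i j : Fin (2 ^ Dn + 1)),
      ((fun k : Fin Dn => decide (((i.val : ℤ) + (k.val : ℤ)) ∈ Λ)) =
       (fun k : Fin Dn => decide (((j.val : ℤ) + (k.val : ℤ)) ∈ Λ))) → i.val < j.val →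
      ∃ t : ℤ, 1 ≤ t ∧ t ≤ 2 ^ Dn ∧ (fun l => l + t) '' Λ = Λ := by
    intro i j hg hlt
    set t : ℤ := (j.val : ℤ) - (i.val : ℤ) with ht
    have hwin : ∀ k : ℤ, 0 ≤ k → k < D → ((i.val : ℤ) + k ∈ Λ ↔ (j.val : ℤ) + k ∈ Λ) := by
      intro k hk hkD
      have hk' : k.toNat < Dn := by omega
      have h := congrFun hg ⟨k.toNat, hk'⟩
      simp only [decide_eq_decide] at h
      have e : ((k.toNat : ℤ)) = k := by omega
      rwa [e] at h
    have hsh := shift _ _ hwin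
    refine ⟨t, by omega, ?_, ?_⟩
    · have hj : (j.val : ℤ) ≤ ((2 ^ Dn : ℕ) : ℤ) := by
        have := j.isLt; exact_mod_cast Nat.lt_succ_iff.mp this
      have : ((2 ^ Dn : ℕ) : ℤ) = (2 : ℤ) ^ Dn := by push_cast; ring
      omega
    · ext z
      simp only [Set.mem_image]
      constructor
      · rintro ⟨l, hl, rfl⟩
        have h := hsh (l - (i.val : ℤ))
        have ex : (i.val : ℤ) + (l - (i.val : ℤ)) = l := by ring
        have ey : (j.val : ℤ) + (l - (i.val : ℤ)) = l + t := by omega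
        rw [ex, ey] at h
        exact h.mp hl
      · intro hz
        refine ⟨z - t, ?_, by ring⟩
        have h := hsh (z - t - (i.val : ℤ))
        have ex : (i.val : ℤ) + (z - t - (i.val : ℤ)) = z - t := by ring
        have ey : (j.val : ℤ) + (z - t - (i.val : ℤ)) = z := by omega
        rw [ex, ey] at h
        exact h.mpr hz
  rcases lt_or_gt_of_ne (fun h => hij (by exact h)) with hlt | hlt
  · exact hmain i j hgij (by exact_mod_cast hlt)
  · exact hmain j i hgij.symm (by exact_mod_cast hlt)
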